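/- For the distribution F_{T,ε} with 0 < ε ≤ min(T,1), the welfare ratio E[v] / E[v·1[v ≥ T]] equals (log(T+1) - T/(T+1) + (2T+ε)/(2T+2)) / ((2T+ε)/(2T+2)), which is at least (1/2)·log(T+1) for T ≥ 3; in particular selling at the monopolistic price T loses a Θ(log T) fraction of welfare. -/

import Mathlib

/-- For the distribution `F_{T,ε}` with `0 < ε ≤ min(T,1)` and density
`f z = 1/(z+1)²` on `[0,T]`, `f z = 1/(ε(T+1))` on `(T, T+ε]`: the welfare of selling
at the monopolistic price `T` is `∫_T^{T+ε} z f(z) dz = (2T+ε)/(2T+2)`, the total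
welfare is `∫_0^T z/(z+1)² dz + (2T+ε)/(2T+2)` with
`∫_0^T z/(z+1)² dz = log(T+1) - T/(T+1)`, and for `T ≥ 3` the welfare ratio is at
least `(1/2)·log(T+1)`, i.e. a `Θ(log T)` fraction of welfare is lost. -/
theorem stmt_18 (T ε : ℝ) (hε : 0 < ε) (hεT : ε ≤ T) (hε1 : ε ≤ 1) :
    (∫ z in (0:ℝ)..T, z / (z + 1) ^ 2) = Real.log (T + 1) - T / (T + 1) ∧
    (∫ z in T..(T + ε), z / (ε * (T + 1))) = (2 * T + ε) / (2 * T + 2) ∧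
    (3 ≤ T →
      (Real.log (T + 1) - T / (T + 1) + (2 * T + ε) / (2 * T + 2)) /
          ((2 * T + ε) / (2 * T + 2)) ≥ 1 / 2 * Real.log (T + 1)) := by
  have hT : 0 < T := lt_of_lt_of_le hε hεT
  refine ⟨?_, ?_, ?_⟩
  · have key : ∀ x ∈ Set.uIcc (0:ℝ) T,
        HasDerivAt (fun x => Real.log (x + 1) + (x + 1)⁻¹) (x / (x + 1) ^ 2) x := by
      intro x hx
      rw [Set.uIcc_of_le hT.le] at hx
      have hx0 : (0:ℝ) < x + 1 := by linarith [hx.1]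
      have h1 : HasDerivAt (fun x : ℝ => Real.log (x + 1)) (1 / (x + 1)) x := by
        have := (Real.hasDerivAt_log hx0.ne').comp x
          ((hasDerivAt_id x).add_const 1)
        simpa [one_div, Function.comp_def] using this
      have h2 : HasDerivAt (fun x : ℝ => (x + 1)⁻¹) (-1 / (x + 1) ^ 2) x := by
        have := ((hasDerivAt_id x).add_const 1).inv hx0.ne'
        simpa [Pi.inv_def] using this
      have := h1.add h2
      refine this.congr_deriv ?_
      rw [div_add_div _ _ hx0.ne' (pow_ne_zero 2 hx0.ne'), div_eq_div_iff (mul_ne_zero hx0.ne' (pow_ne_zero 2 hx0.ne')) (pow_ne_zero 2 hx0.ne')]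
      ring
    rw [intervalIntegral.integral_eq_sub_of_hasDerivAt key (by
      apply ContinuousOn.intervalIntegrable
      apply ContinuousOn.div continuousOn_id (by fun_prop)
      intro x hx
      rw [Set.uIcc_of_le hT.le] at hx
      have : (0:ℝ) < x + 1 := by linarith [hx.1]
      positivity
      )]
    have hT1 : (0:ℝ) < T + 1 := by linarith
    field_simp
    simp only [zero_add, Real.log_one]
    ring
  · rw [intervalIntegral.integral_div]
    rw [show (∫ x in T..(T+ε), x) = ((T+ε)^2 - T^2)/2 by
      simpa using intervalIntegral.integral_id (a := T) (b := T+ε)]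
    have hεT1 : ε * (T + 1) ≠ 0 := by positivity
    field_simp
    ring
  · intro hT3
    have hB : 0 < (2 * T + ε) / (2 * T + 2) := by
      apply div_pos <;> linarith
    have hL : 1 ≤ Real.log (T + 1) := by
      rw [Real.le_log_iff_exp_le (by linarith)]
      have := Real.exp_one_lt_d9
      linarith
    have hT1 : T / (T + 1) ≤ 1 := by
      rw [div_le_one (by linarith)]; linarith
    have hA : 0 ≤ Real.log (T + 1) - T / (T + 1) := by linarith
    rw [add_div, div_self hB.ne']
    have h1 : Real.log (T + 1) - T / (T + 1) ≤
        (Real.log (T + 1) - T / (T + 1)) / ((2 * T + ε) / (2 * T + 2)) := by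
      rw [le_div_iff₀ hB]
      nlinarith [hB, div_le_one_of_le₀ (show 2 * T + ε ≤ 2 * T + 2 by linarith)
        (by linarith : (0:ℝ) ≤ 2 * T + 2)]
    linarith
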